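/- Let x : Fin h × Fin w × T → {0,1} be a binary assignment. Then x satisfies (i) ∑_{k∈T} x(i,j,k) ≤ 1 for every cell (i,j); (ii) for every color ℓ and horizontally consecutive cells (i,j), (i,j+1): ∑_{k∈T, e(k)=ℓ} x(i,j,k) + ∑_{k∈T, w(k)≠ℓ} x(i,j+1,k) ≤ 1; and (iii) for every color ℓ and vertically consecutive cells (i,j), (i+1,j): ∑_{k∈T, s(k)=ℓ} x(i,j,k) + ∑_{k∈T, n(k)≠ℓ} x(i+1,j,k) ≤ 1 — if and only if the partial tiling τ : Fin h × Fin w → Option T, defined by τ(i,j) = some k when x(i,j,k) = 1 and τ(i,j) = none when ∑_k x(i,j,k) = 0, is a valid partial tiling. Moreover ∑_{i,j,k} x(i,j,k) equals the cover size of τ. -/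
import Mathlib


/-- Validity of a partial tiling: adjacent cells that both hold tiles must have
matching colors on their shared edge. -/
def ValidPartial {C T : Type} {h w : ℕ} (tn tw ts te : T → C)
    (τ : Fin h → Fin w → Option T) : Prop :=
  (∀ (i : Fin h) (j : Fin w) (hi : i.val + 1 < h) (p q : T),
      τ i j = some p → τ ⟨i.val + 1, hi⟩ j = some q → ts p = tn q) ∧
  (∀ (i : Fin h) (j : Fin w) (hj : j.val + 1 < w) (p q : T),
      τ i j = some p → τ i ⟨j.val + 1, hj⟩ = some q → te p = tw q)

/-- Number of cells holding a tile. -/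
def coverSize {T : Type} {h w : ℕ} (τ : Fin h → Fin w → Option T) : ℕ :=
  (Finset.univ.filter fun p : Fin h × Fin w => (τ p.1 p.2).isSome).card

/-- the maximum-cover constraints (16) hold for a binary assignment
iff the induced partial tiling is valid; moreover the objective equals the cover size. -/
theorem stmt_1 {C T : Type} [Fintype T] [DecidableEq C]
    {h w : ℕ} (tn tw ts te : T → C)
    (x : Fin h → Fin w → T → ℕ)
    (hx : ∀ i j k, x i j k = 0 ∨ x i j k = 1)
    (τ : Fin h → Fin w → Option T)
    (hτ : ∀ i j k, x i j k = 1 ↔ τ i j = some k)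
    (hτ0 : ∀ i j, (∑ k : T, x i j k) = 0 ↔ τ i j = none) :
    (((∀ i j, (∑ k : T, x i j k) ≤ 1) ∧
      (∀ (i : Fin h) (j : Fin w) (hj : j.val + 1 < w) (ℓ : C),
        (∑ k : T, if te k = ℓ then x i j k else 0) +
          (∑ k : T, if tw k ≠ ℓ then x i ⟨j.val + 1, hj⟩ k else 0) ≤ 1) ∧
      (∀ (i : Fin h) (j : Fin w) (hi : i.val + 1 < h) (ℓ : C),
        (∑ k : T, if ts k = ℓ then x i j k else 0) +
          (∑ k : T, if tn k ≠ ℓ then x ⟨i.val + 1, hi⟩ j k else 0) ≤ 1))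
      ↔ ValidPartial tn tw ts te τ) ∧
    (∑ i : Fin h, ∑ j : Fin w, ∑ k : T, x i j k) = coverSize τ := by
  classical
  have hx0 : ∀ i j k, τ i j ≠ some k → x i j k = 0 := by
    intro i j k hne
    rcases hx i j k with h0 | h1
    · exact h0
    · exact absurd ((hτ i j k).mp h1) hne
  have hsum : ∀ (i : Fin h) (j : Fin w) (P : T → Prop) [DecidablePred P],
      (∑ k : T, if P k then x i j k else 0)
        = Option.elim (τ i j) 0 (fun p => if P p then 1 else 0) := by
    intro i j P _
    cases hcase : τ i j with
    | none =>
      simp only [Option.elim]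
      refine Finset.sum_eq_zero fun k _ => ?_
      have : x i j k = 0 := hx0 i j k (by rw [hcase]; simp)
      simp [this]
    | some p =>
      simp only [Option.elim]
      rw [Finset.sum_eq_single p]
      · rw [(hτ i j p).mpr hcase]
      · intro k _ hk
        have : x i j k = 0 := hx0 i j k (by rw [hcase]; simpa using fun e => hk e.symm)
        simp [this]
      · intro habs; exact absurd (Finset.mem_univ p) habs
  have hsumtot : ∀ (i : Fin h) (j : Fin w),
      (∑ k : T, x i j k) = Option.elim (τ i j) 0 (fun _ => 1) := by
    intro i j
    have := hsum i j (fun _ => True)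
    simpa using this
  constructor
  · constructor
    · rintro ⟨h1, h2, h3⟩
      constructor
      · intro i j hi p q hp hq
        by_contra hne
        have := h3 i j hi (ts p)
        rw [hsum, hsum, hp, hq] at this
        simp only [Option.elim, if_pos rfl] at this
        rw [if_pos (show tn q ≠ ts p from fun e => hne e.symm)] at this
        simp at this
      · intro i j hj p q hp hq
        by_contra hne
        have := h2 i j hj (te p)
        rw [hsum, hsum, hp, hq] at this
        simp only [Option.elim, if_pos rfl] at this
        rw [if_pos (show tw q ≠ te p from fun e => hne e.symm)] at this
        simp at this
    · intro hv
      refine ⟨?_, ?_, ?_⟩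
      · intro i j
        rw [hsumtot]
        cases τ i j <;> simp
      · intro i j hj ℓ
        rw [hsum, hsum]
        cases hp : τ i j with
        | none =>
          cases hq : τ i ⟨j.val + 1, hj⟩ <;> simp [Option.elim] <;> split <;> simp
        | some p =>
          cases hq : τ i ⟨j.val + 1, hj⟩ with
          | none => simp only [Option.elim]; split <;> simp
          | some q =>
            have heq := hv.2 i j hj p q hp hq
            simp only [Option.elim]
            by_cases hℓ : te p = ℓ
            · rw [if_pos hℓ, if_neg (by rw [← heq, hℓ]; simp)]
            · rw [if_neg hℓ]
              split <;> simp
      · intro i j hi ℓ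
        rw [hsum, hsum]
        cases hp : τ i j with
        | none =>
          cases hq : τ ⟨i.val + 1, hi⟩ j <;> simp [Option.elim] <;> split <;> simp
        | some p =>
          cases hq : τ ⟨i.val + 1, hi⟩ j with
          | none => simp only [Option.elim]; split <;> simp
          | some q =>
            have heq := hv.1 i j hi p q hp hq
            simp only [Option.elim]
            by_cases hℓ : ts p = ℓ
            · rw [if_pos hℓ, if_neg (by rw [← heq, hℓ]; simp)]
            · rw [if_neg hℓ]
              split <;> simp
  · rw [coverSize, Finset.card_filter]
    rw [Fintype.sum_prod_type]
    refine Finset.sum_congr rfl fun i _ => Finset.sum_congr rfl fun j _ => ?_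
    rw [hsumtot]
    cases τ i j <;> simp
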